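/- arXiv:2512.23249 — 3 statements merged into one kernel-verified Lean document; each statement's English description precedes it below -/
import Mathlib

section
/- Let I : M × N → ℝ with d_{I,M}(x,y) = sup_{z∈N}(I(x,z) − I(y,z)) finite, (M, d^sym_{I,M}) separable, and let L(N) ⊆ Lip¹_b(M, d^sym_{I,M}) be the image of the horofunction map z ↦ (x ↦ I(x,z) − I(b,z)). Then for any x, y ∈ M the supremum defining d_{I,M}(x,y) is attained at some element of the closure of L(N) in the pointwise-convergence topology: there exists h in the closure of L(N) with d_{I,M}(x,y) = h(x) − h(y). -/
/-- The supremum defining `d_{I,M}(x,y)` is attained at some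
element of the closure (pointwise-convergence topology) of the image of the
horofunction map `z ↦ (w ↦ I(w,z) - I(b,z))`. -/
theorem stmt_9 {M N : Type*} [Nonempty M] [Nonempty N] (I : M → N → ℝ) (b : M)
    (hbdd : ∀ x y : M, BddAbove (Set.range fun z => I x z - I y z))
    (D : Set M) (hDcount : D.Countable)
    (hDdense : ∀ x : M, ∀ ε > (0 : ℝ), ∃ y ∈ D,
      max (⨆ z : N, (I x z - I y z)) (⨆ z : N, (I y z - I x z)) < ε) :
    ∀ x y : M, ∃ h ∈ closure (Set.range fun z : N => fun w : M => I w z - I b z),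
      (⨆ z : N, (I x z - I y z)) = h x - h y := by
  intro x y
  set f : N → (M → ℝ) := fun z w => I w z - I b z with hf
  set K : Set (M → ℝ) :=
    Set.pi Set.univ (fun w => Set.Icc (-(⨆ z : N, (I b z - I w z)))
      (⨆ z : N, (I w z - I b z))) with hK
  have hsub : Set.range f ⊆ K := by
    rintro _ ⟨z, rfl⟩ w _
    constructor
    · have := le_ciSup (hbdd b w) z
      simp only [f]
      linarith
    · exact le_ciSup (hbdd w b) z
  have hKc : IsCompact K := isCompact_univ_pi (fun w => isCompact_Icc)
  have hcomp : IsCompact (closure (Set.range f)) :=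
    hKc.of_isClosed_subset isClosed_closure (closure_minimal hsub hKc.isClosed)
  have hne : (closure (Set.range f)).Nonempty := (Set.range_nonempty f).closure
  have hcont : Continuous fun u : M → ℝ => u x - u y :=
    (continuous_apply x).sub (continuous_apply y)
  obtain ⟨h, hh, hmax⟩ := hcomp.exists_isMaxOn hne hcont.continuousOn
  refine ⟨h, hh, le_antisymm ?_ ?_⟩
  · apply ciSup_le
    intro z
    have := hmax (subset_closure ⟨z, rfl⟩)
    simp only [f, Set.mem_setOf_eq] at this ⊢
    linarith
  · have hcl : closure (Set.range f) ⊆ {u | u x - u y ≤ ⨆ z : N, (I x z - I y z)} := by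
      apply closure_minimal
      · rintro _ ⟨z, rfl⟩
        have := le_ciSup (hbdd x y) z
        simp only [f, Set.mem_setOf_eq]
        linarith
      · exact isClosed_le hcont continuous_const
    exact hcl hh
end

section
/- Let X be a compact metrizable space, g : X → X a homeomorphism, b a point of a set M on which g acts, and suppose each h ∈ X is a real-valued function on M with h(b) = 0 such that the cocycle identity h(g⁻ⁿb) = Σ_{i=0}^{n−1}(gⁱ·h)(g⁻¹b) holds, where the action of g on X is (g·h)(x) = h(g⁻¹x) − h(g⁻¹b) and evaluation h ↦ h(g⁻¹b) is continuous on X. If g has north–south dynamics on X with attracting fixed point h₊ and repelling fixed point h₋ (i.e., gⁿ·h → h₊ for all h ≠ h₋ and g⁻ⁿ·h → h₋ for all h ≠ h₊), then for every h ≠ h₋ in X, lim_{n→∞} (1/n) h(g⁻ⁿ·b) = h₊(g⁻¹·b). -/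
/-- The twisted action of `G` on functions `M → ℝ` relative to a basepoint `b`:
`(g · h)(x) = h(g⁻¹ • x) - h(g⁻¹ • b)`. -/
def horoAction {G M : Type*} [Group G] [MulAction G M] (b : M)
    (g : G) (h : M → ℝ) : M → ℝ :=
  fun x => h (g⁻¹ • x) - h (g⁻¹ • b)

/-- if `g` has north–south dynamics on a compact invariant set `X`
of horofunctions (functions vanishing at `b`, with pointwise convergence
topology), with attracting fixed point `h₊` and repelling fixed point `h₋`,
then for every `h ∈ X` with `h ≠ h₋` we have
`lim (1/n) h(g⁻ⁿ·b) = h₊(g⁻¹·b)`. -/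
theorem stmt_13 {G M : Type*} [Group G] [MulAction G M] (b : M) (g : G)
    (X : Set (M → ℝ)) (hXcompact : IsCompact X)
    (hXzero : ∀ h ∈ X, h b = 0)
    (hXinv : ∀ h ∈ X, horoAction b g h ∈ X ∧ horoAction b g⁻¹ h ∈ X)
    (hplus hminus : M → ℝ) (hplusX : hplus ∈ X) (hminusX : hminus ∈ X)
    (hne : hplus ≠ hminus)
    (hfixplus : horoAction b g hplus = hplus)
    (hfixminus : horoAction b g hminus = hminus)
    (hNSplus : ∀ h ∈ X, h ≠ hminus →
      Filter.Tendsto (fun n : ℕ => horoAction b (g ^ n) h) Filter.atTop (nhds hplus))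
    (hNSminus : ∀ h ∈ X, h ≠ hplus →
      Filter.Tendsto (fun n : ℕ => horoAction b (g⁻¹ ^ n) h) Filter.atTop (nhds hminus)) :
    ∀ h ∈ X, h ≠ hminus →
      Filter.Tendsto (fun n : ℕ => h ((g ^ n)⁻¹ • b) / n) Filter.atTop
        (nhds (hplus (g⁻¹ • b))) := by
  intro h hX hne'
  have hu : Filter.Tendsto (fun n : ℕ => horoAction b (g ^ n) h (g⁻¹ • b))
      Filter.atTop (nhds (hplus (g⁻¹ • b))) :=
    ((continuous_apply (g⁻¹ • b)).tendsto hplus).comp (hNSplus h hX hne')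
  have key : ∀ n : ℕ, ∑ i ∈ Finset.range n, horoAction b (g ^ i) h (g⁻¹ • b)
      = h ((g ^ n)⁻¹ • b) := by
    intro n
    induction n with
    | zero => simp [hXzero h hX]
    | succ n ih =>
      rw [Finset.sum_range_succ, ih]
      simp only [horoAction]
      have : (g ^ n)⁻¹ • g⁻¹ • b = (g ^ (n + 1))⁻¹ • b := by
        rw [smul_smul, ← mul_inv_rev, ← pow_succ']
      rw [this]
      ring
  have := hu.cesaro
  simpa only [key, div_eq_inv_mul] using this
end

section
/- Let ℍ = {x + iy : y > 0} be the upper half-plane with its hyperbolic metric d_ℍ. Define I : ℍ × ℝ → ℝ by I(x + iy, t) = log(y + (t + x)²/y). Then for all z, w ∈ ℍ: d_ℍ(z, w) = sup_{t ∈ ℝ} (I(z,t) − I(w,t)). -/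
open UpperHalfPlane

/-- Minsky: on the hyperbolic upper half-plane, with
`I(x + iy, t) = log (y + (t + x)² / y)`, one recovers the hyperbolic distance:
`d_ℍ(z, w) = sup_{t ∈ ℝ} (I(z,t) - I(w,t))`. -/
theorem stmt_18 (z w : UpperHalfPlane) :
    dist z w =
      ⨆ t : ℝ, (Real.log (z.im + (t + z.re) ^ 2 / z.im) -
                Real.log (w.im + (t + w.re) ^ 2 / w.im)) := by
  have hA : (0:ℝ) < z.im := z.im_pos
  have hB : (0:ℝ) < w.im := w.im_pos
  set D := dist z w with hDdef
  have hD0 : 0 ≤ D := dist_nonneg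
  set E := Real.exp D with hE
  have hE1 : 1 ≤ E := Real.one_le_exp hD0
  have hEpos : 0 < E := lt_of_lt_of_le one_pos hE1
  have hcosh : Real.cosh D = ((z.re - w.re)^2 + z.im^2 + w.im^2) / (2 * z.im * w.im) :=
    UpperHalfPlane.cosh_dist' z w
  have hE2 : E^2 + 1 = 2 * Real.cosh D * E := by
    rw [Real.cosh_eq, Real.exp_neg, hE]
    field_simp
  have hcosh' : Real.cosh D * (2 * z.im * w.im) = (z.re - w.re)^2 + z.im^2 + w.im^2 := by
    rw [hcosh]; field_simp
  have hkey : E^2 * (z.im * w.im) + z.im * w.im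
      = E * ((z.re - w.re)^2 + z.im^2 + w.im^2) := by
    linear_combination (z.im * w.im) * hE2 + E * hcosh'
  have h2 : (E*z.im - w.im)*(E*w.im - z.im) = E*(z.re-w.re)^2 := by linear_combination hkey
  have hEA : w.im ≤ E * z.im := by
    by_contra h
    push_neg at h
    have h3 : E*w.im - z.im ≤ 0 := by
      by_contra h3
      push_neg at h3
      nlinarith [mul_pos (by linarith : (0:ℝ) < w.im - E*z.im) h3,
        mul_nonneg hEpos.le (sq_nonneg (z.re - w.re))]
    nlinarith [mul_le_mul_of_nonneg_left h3 hEpos.le, sq_nonneg E]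
  have hq : ∀ t : ℝ, (E*z.im - w.im) * (E*z.im*((t+w.re)^2+w.im^2) - w.im*((t+z.re)^2+z.im^2))
      = ((E*z.im - w.im)*t + (E*z.im*w.re - w.im*z.re))^2 := by
    intro t
    linear_combination (z.im * w.im) * hkey
  have hub : ∀ t : ℝ, w.im * ((t + z.re)^2 + z.im^2) ≤ E * z.im * ((t + w.re)^2 + w.im^2) := by
    intro t
    rcases eq_or_lt_of_le hEA with heq | hlt
    · have h0 : E * (z.re - w.re)^2 = 0 := by
        linear_combination (z.im - E*w.im) * heq - hkey
      have h1 : (z.re - w.re)^2 = 0 := (mul_eq_zero.1 h0).resolve_left hEpos.ne'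
      have hre : z.re = w.re := by
        have := pow_eq_zero_iff (n := 2) (by norm_num) |>.mp h1
        linarith
      have hAB : z.im ≤ w.im := by nlinarith
      rw [hre, ← heq]
      nlinarith [mul_nonneg hB.le (mul_nonneg (sub_nonneg.2 hAB) (add_pos hA hB).le)]
    · nlinarith [hq t, sq_nonneg ((E*z.im - w.im)*t + (E*z.im*w.re - w.im*z.re)), hlt]
  have hX : ∀ t : ℝ, (0:ℝ) < z.im + (t + z.re)^2 / z.im := fun t => by positivity
  have hY : ∀ t : ℝ, (0:ℝ) < w.im + (t + w.re)^2 / w.im := fun t => by positivity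
  have hXeq : ∀ t : ℝ, z.im + (t + z.re)^2 / z.im = ((t + z.re)^2 + z.im^2) / z.im := by
    intro t; field_simp; ring
  have hYeq : ∀ t : ℝ, w.im + (t + w.re)^2 / w.im = ((t + w.re)^2 + w.im^2) / w.im := by
    intro t; field_simp; ring
  have hval : ∀ t : ℝ, Real.log (z.im + (t + z.re)^2 / z.im)
      - Real.log (w.im + (t + w.re)^2 / w.im) ≤ D := by
    intro t
    have hineq : z.im + (t + z.re)^2 / z.im ≤ E * (w.im + (t + w.re)^2 / w.im) := by
      rw [hXeq, hYeq, ← mul_div_assoc, div_le_div_iff₀ hA hB]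
      nlinarith [hub t]
    have := Real.log_le_log (hX t) hineq
    rw [Real.log_mul hEpos.ne' (hY t).ne', hE, Real.log_exp] at this
    linarith
  have hbdd : BddAbove (Set.range fun t : ℝ =>
      Real.log (z.im + (t + z.re)^2 / z.im) - Real.log (w.im + (t + w.re)^2 / w.im)) :=
    ⟨D, by rintro x ⟨t, rfl⟩; exact hval t⟩
  refine le_antisymm ?_ (ciSup_le hval)
  rcases eq_or_lt_of_le hEA with heq | hlt
  · -- vertical case: z.re = w.re and E = w.im / z.im; use limit at infinity
    have h0 : E * (z.re - w.re)^2 = 0 := by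
      linear_combination (z.im - E*w.im) * heq - hkey
    have h1 : (z.re - w.re)^2 = 0 := (mul_eq_zero.1 h0).resolve_left hEpos.ne'
    have hre : z.re = w.re := by
      have := pow_eq_zero_iff (n := 2) (by norm_num) |>.mp h1
      linarith
    have hDval : D = Real.log w.im - Real.log z.im := by
      have hEv : E = w.im / z.im := by field_simp [heq.symm]; linarith
      rw [← Real.log_exp D, ← hE, hEv, Real.log_div hB.ne' hA.ne']
    have h1t : Filter.Tendsto (fun t : ℝ => (t + z.re)^2 + w.im^2) Filter.atTop Filter.atTop :=
      Filter.tendsto_atTop_add_const_right _ _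
        ((Filter.tendsto_pow_atTop two_ne_zero).comp (Filter.tendsto_atTop_add_const_right _ _ Filter.tendsto_id))
    have h2t : Filter.Tendsto (fun t : ℝ => (z.im^2 - w.im^2) / ((t + z.re)^2 + w.im^2))
        Filter.atTop (nhds 0) := Filter.Tendsto.div_atTop tendsto_const_nhds h1t
    have h3t : Filter.Tendsto (fun t : ℝ => ((t + z.re)^2 + z.im^2) / ((t + z.re)^2 + w.im^2))
        Filter.atTop (nhds 1) := by
      have hfe : (fun t : ℝ => ((t + z.re)^2 + z.im^2) / ((t + z.re)^2 + w.im^2))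
          = fun t => 1 + (z.im^2 - w.im^2) / ((t + z.re)^2 + w.im^2) := by
        funext t
        have hd : (t + z.re)^2 + w.im^2 ≠ 0 := by positivity
        field_simp
        ring
      rw [hfe]
      simpa using tendsto_const_nhds.add h2t
    have h4t : Filter.Tendsto
        (fun t : ℝ => Real.log (((t + z.re)^2 + z.im^2) / ((t + z.re)^2 + w.im^2)))
        Filter.atTop (nhds 0) := by
      have := (Real.continuousAt_log one_ne_zero).tendsto.comp h3t
      simpa [Function.comp_def] using this
    have hfun : ∀ t : ℝ, Real.log (z.im + (t + z.re)^2 / z.im)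
        - Real.log (w.im + (t + w.re)^2 / w.im)
        = Real.log (((t + z.re)^2 + z.im^2) / ((t + z.re)^2 + w.im^2))
          + (Real.log w.im - Real.log z.im) := by
      intro t
      have hn1 : ((t + z.re)^2 + z.im^2) ≠ 0 := by positivity
      have hn2 : ((t + z.re)^2 + w.im^2) ≠ 0 := by positivity
      rw [hXeq, hYeq, ← hre, Real.log_div hn1 hA.ne', Real.log_div (by positivity) hB.ne',
        Real.log_div hn1 hn2]
      ring
    have htend : Filter.Tendsto (fun t : ℝ => Real.log (z.im + (t + z.re)^2 / z.im)
        - Real.log (w.im + (t + w.re)^2 / w.im)) Filter.atTop (nhds D) := by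
      have := h4t.add (tendsto_const_nhds (x := Real.log w.im - Real.log z.im))
      rw [zero_add] at this
      rw [hDval]
      exact this.congr fun t => (hfun t).symm
    exact le_of_tendsto htend (Filter.Eventually.of_forall fun t => le_ciSup hbdd t)
  · -- generic case: the sup is attained at t₀
    set t₀ := (w.im * z.re - E * z.im * w.re) / (E * z.im - w.im) with ht₀
    have hden : E * z.im - w.im ≠ 0 := sub_ne_zero.2 (ne_of_gt hlt)
    have ht0 : (E*z.im - w.im) * t₀ + (E*z.im*w.re - w.im*z.re) = 0 := by
      rw [ht₀]; field_simp; ring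
    have hq0 := hq t₀
    rw [ht0] at hq0
    have hzero : E*z.im*((t₀+w.re)^2+w.im^2) - w.im*((t₀+z.re)^2+z.im^2) = 0 :=
      (mul_eq_zero.1 (by simpa using hq0)).resolve_left hden
    have hXY : z.im + (t₀ + z.re)^2 / z.im = E * (w.im + (t₀ + w.re)^2 / w.im) := by
      rw [hXeq, hYeq, ← mul_div_assoc, div_eq_div_iff hA.ne' hB.ne']
      linear_combination -hzero
    have hDeq : Real.log (z.im + (t₀ + z.re)^2 / z.im)
        - Real.log (w.im + (t₀ + w.re)^2 / w.im) = D := by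
      rw [hXY, Real.log_mul hEpos.ne' (hY t₀).ne', hE, Real.log_exp]
      ring
    calc D = _ := hDeq.symm
      _ ≤ _ := le_ciSup hbdd t₀
end
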